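/- For the maximally-mixed-marginals box P = s·[(1/√2)P_PR^{000} + (1−1/√2)P_N] + (1−s)·P_N with 0 ≤ s ≤ 1, one has T(P) = G(P) = 2√2·s, and P violates the CHSH inequality B_{000} ≤ 2 if and only if s > 1/√2. -/

import Mathlib

open scoped Matrix Kronecker

noncomputable section

/-- A bipartite box: `P i j m n` is the probability of outputs `m,n` given inputs `i,j`. -/
abbrev Box := Fin 2 → Fin 2 → Fin 2 → Fin 2 → ℝ

/-- A box has nonnegative entries, normalized for every input pair. -/
def IsBox (P : Box) : Prop :=
  (∀ i j m n, 0 ≤ P i j m n) ∧ ∀ i j, (∑ m, ∑ n, P i j m n) = 1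

/-- Nonsignaling conditions. -/
def NonSignaling (P : Box) : Prop :=
  (∀ i j j' m, (∑ n, P i j m n) = ∑ n, P i j' m n) ∧
  (∀ i i' j n, (∑ m, P i j m n) = ∑ m, P i' j m n)

/-- `(-1)^k` for a bit `k`. -/
def sgn (k : Fin 2) : ℝ := (-1 : ℝ) ^ (k : ℕ)

/-- Correlator `⟨A_i B_j⟩`. -/
def corr (P : Box) (i j : Fin 2) : ℝ := ∑ m, ∑ n, sgn (m + n) * P i j m n

/-- Marginal expectation `⟨A_i⟩` of Alice. -/
def margA (P : Box) (i : Fin 2) : ℝ := ∑ m, ∑ n, sgn m * P i 0 m n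

/-- Marginal expectation `⟨B_j⟩` of Bob. -/
def margB (P : Box) (j : Fin 2) : ℝ := ∑ m, ∑ n, sgn n * P 0 j m n

/-- The PR boxes `P_PR^{αβγ}`. -/
def PRbox (a b g : Fin 2) : Box :=
  fun i j m n => if m + n = i * j + a * i + b * j + g then 1/2 else 0

/-- The local deterministic boxes `P_D^{αβγε}`. -/
def Dbox (a b g e : Fin 2) : Box :=
  fun i j m n => if m = a * i + b ∧ n = g * j + e then 1 else 0

/-- The white-noise box `P_N`. -/
def whiteNoise : Box := fun _ _ _ _ => 1/4

/-- The signed Bell-CHSH functions `B_{αβγ}`. -/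
def BellF (P : Box) (a b g : Fin 2) : ℝ :=
  sgn g * corr P 0 0 + sgn (b + g) * corr P 0 1 + sgn (a + g) * corr P 1 0 +
    sgn (a + b + g + 1) * corr P 1 1

/-- The Bell distances `B_{αβ} = max_γ |B_{αβγ}|`. -/
def BellD (P : Box) (a b : Fin 2) : ℝ := max |BellF P a b 0| |BellF P a b 1|

/-- Bell discord `G`. -/
def BellDiscord (P : Box) : ℝ :=
  min (min (|(|BellD P 0 0 - BellD P 0 1| - |BellD P 1 0 - BellD P 1 1|)|)
           (|(|BellD P 0 0 - BellD P 1 0| - |BellD P 0 1 - BellD P 1 1|)|))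
      (|(|BellD P 0 0 - BellD P 1 1| - |BellD P 0 1 - BellD P 1 0|)|)

/-- The signed Mermin functions `M_{αβγ}`. -/
def MerminF (P : Box) (a b g : Fin 2) : ℝ :=
  if a = 0 ∧ b = 0 then sgn g * (corr P 0 1 + corr P 1 0)
  else if a = 0 ∧ b = 1 then sgn g * (corr P 0 0 + corr P 1 1)
  else if a = 1 ∧ b = 0 then sgn g * (corr P 0 1 - corr P 1 0)
  else sgn g * (corr P 0 0 - corr P 1 1)

/-- The Mermin distances `M_{αβ} = max_γ |M_{αβγ}|`. -/
def MerminD (P : Box) (a b : Fin 2) : ℝ := max |MerminF P a b 0| |MerminF P a b 1|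

/-- Mermin discord `Q`. -/
def MerminDiscord (P : Box) : ℝ :=
  min (min (|(|MerminD P 0 0 - MerminD P 0 1| - |MerminD P 1 0 - MerminD P 1 1|)|)
           (|(|MerminD P 0 0 - MerminD P 1 0| - |MerminD P 0 1 - MerminD P 1 1|)|))
      (|(|MerminD P 0 0 - MerminD P 1 1| - |MerminD P 0 1 - MerminD P 1 0|)|)

/-- The signed product Bell expressions, built from products of marginal expectations. -/
def BellProdF (P : Box) (a b : Fin 2) : ℝ :=
  margA P 0 * margB P 0 + sgn b * (margA P 0 * margB P 1) + sgn a * (margA P 1 * margB P 0) +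
    sgn (a + b + 1) * (margA P 1 * margB P 1)

/-- `B^{prod}_{αβ}`. -/
def BellProdD (P : Box) (a b : Fin 2) : ℝ := |BellProdF P a b|

/-- The total-correlation measure `T = max_{αβ} |B_{αβ} - B^{prod}_{αβ}|`. -/
def Tmeasure (P : Box) : ℝ :=
  max (max (|BellD P 0 0 - BellProdD P 0 0|) (|BellD P 0 1 - BellProdD P 0 1|))
      (max (|BellD P 1 0 - BellProdD P 1 0|) (|BellD P 1 1 - BellProdD P 1 1|))

/-- A product box: the joint distribution factorizes into marginal distributions. -/
def IsProduct (P : Box) : Prop :=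
  ∃ PA PB : Fin 2 → Fin 2 → ℝ,
    (∀ i m, 0 ≤ PA i m) ∧ (∀ i, ∑ m, PA i m = 1) ∧
    (∀ j n, 0 ≤ PB j n) ∧ (∀ j, ∑ n, PB j n = 1) ∧
    ∀ i j m n, P i j m n = PA i m * PB j n

/-- A local box: a convex combination of local deterministic boxes. -/
def IsLocal (P : Box) : Prop :=
  ∃ q : Fin 2 → Fin 2 → Fin 2 → Fin 2 → ℝ,
    (∀ a b g e, 0 ≤ q a b g e) ∧ (∑ a, ∑ b, ∑ g, ∑ e, q a b g e) = 1 ∧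
    ∀ i j m n, P i j m n = ∑ a, ∑ b, ∑ g, ∑ e, q a b g e * Dbox a b g e i j m n

/-- Local reversible operation (relabeling of inputs and, conditionally, outputs). -/
def relabel (sA a b sB c d : Fin 2) (P : Box) : Box :=
  fun i j m n => P (i + sA) (j + sB) (m + a * i + b) (n + c * j + d)

/-- Pauli matrices. -/
def σx : Matrix (Fin 2) (Fin 2) ℂ := !![0, 1; 1, 0]
def σy : Matrix (Fin 2) (Fin 2) ℂ := !![0, -Complex.I; Complex.I, 0]
def σz : Matrix (Fin 2) (Fin 2) ℂ := !![1, 0; 0, -1]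

/-- The observable `â · σ⃗` for a direction `â = (a_x, a_y, a_z)`. -/
def obs (v : ℝ × ℝ × ℝ) : Matrix (Fin 2) (Fin 2) ℂ :=
  (v.1 : ℂ) • σx + (v.2.1 : ℂ) • σy + (v.2.2 : ℂ) • σz

/-- Quantum correlator `⟨A ⊗ B⟩_ρ = Tr(ρ (A ⊗ B))`. -/
def qCorr (ρ : Matrix (Fin 2 × Fin 2) (Fin 2 × Fin 2) ℂ)
    (A B : Matrix (Fin 2) (Fin 2) ℂ) : ℝ := (Matrix.trace (ρ * (A ⊗ₖ B))).re

/-- Projector onto the `(-1)^m` eigenspace of a ±1-valued observable `A`. -/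
def projOut (A : Matrix (Fin 2) (Fin 2) ℂ) (m : Fin 2) : Matrix (Fin 2) (Fin 2) ℂ :=
  (2⁻¹ : ℂ) • ((1 : Matrix (Fin 2) (Fin 2) ℂ) + ((-1 : ℂ) ^ (m : ℕ)) • A)

/-- The quantum box determined by a two-qubit state and local observables. -/
def qBox (ρ : Matrix (Fin 2 × Fin 2) (Fin 2 × Fin 2) ℂ)
    (A0 A1 B0 B1 : Matrix (Fin 2) (Fin 2) ℂ) : Box :=
  fun i j m n =>
    (Matrix.trace (ρ * ((projOut (if i = 0 then A0 else A1) m) ⊗ₖ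
      (projOut (if j = 0 then B0 else B1) n)))).re

/-- The Bell state `|ψ⁺⟩ = (|00⟩ + |11⟩)/√2` as a density matrix. -/
def ρBell : Matrix (Fin 2 × Fin 2) (Fin 2 × Fin 2) ℂ :=
  Matrix.of fun x y =>
    (if x.1 = x.2 then ((Real.sqrt 2)⁻¹ : ℂ) else 0) *
      (if y.1 = y.2 then ((Real.sqrt 2)⁻¹ : ℂ) else 0)

/-- The Schmidt state `ρ_S` with parameters `c = cos 2θ`, `s = sin 2θ`. -/
def ρSchmidt (c s : ℝ) : Matrix (Fin 2 × Fin 2) (Fin 2 × Fin 2) ℂ :=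
  (4⁻¹ : ℂ) • ((1 : Matrix (Fin 2 × Fin 2) (Fin 2 × Fin 2) ℂ)
    + (c : ℂ) • (σz ⊗ₖ (1 : Matrix (Fin 2) (Fin 2) ℂ) + (1 : Matrix (Fin 2) (Fin 2) ℂ) ⊗ₖ σz)
    + (s : ℂ) • (σx ⊗ₖ σx - σy ⊗ₖ σy) + σz ⊗ₖ σz)


/-- for the maximally-mixed-marginals box
`P = s[(1/√2)PR^{000} + (1−1/√2)P_N] + (1−s)P_N`, one has `T(P) = G(P) = 2√2·s` and `P`
violates the CHSH inequality `B_{000} ≤ 2` iff `s > 1/√2`. -/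
theorem stmt16 (s : ℝ) (h0 : 0 ≤ s) (h1 : s ≤ 1) :
    let P : Box := s • ((Real.sqrt 2)⁻¹ • PRbox 0 0 0 +
      (1 - (Real.sqrt 2)⁻¹) • whiteNoise) + (1 - s) • whiteNoise
    Tmeasure P = 2 * Real.sqrt 2 * s ∧ BellDiscord P = 2 * Real.sqrt 2 * s ∧
      (BellF P 0 0 0 > 2 ↔ s > (Real.sqrt 2)⁻¹) := by
  intro P
  have hr2 : Real.sqrt 2 * Real.sqrt 2 = 2 := Real.mul_self_sqrt (by norm_num)
  have hrpos : (0:ℝ) < Real.sqrt 2 := Real.sqrt_pos.mpr (by norm_num)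
  set c : ℝ := s * (Real.sqrt 2)⁻¹ with hc
  have hcnn : 0 ≤ c := mul_nonneg h0 (by positivity)
  have h4c : 4 * c = 2 * Real.sqrt 2 * s := by
    rw [hc]; field_simp
    nlinarith [hr2]
  have e00 : corr P 0 0 = c := by
    simp only [P, corr, Fin.sum_univ_two, Pi.add_apply, Pi.smul_apply, smul_eq_mul,
      PRbox, whiteNoise, sgn]
    norm_num [show ((1:Fin 2)+1 : Fin 2) = 0 from rfl]; ring
  have e01 : corr P 0 1 = c := by
    simp only [P, corr, Fin.sum_univ_two, Pi.add_apply, Pi.smul_apply, smul_eq_mul,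
      PRbox, whiteNoise, sgn]
    norm_num [show ((1:Fin 2)+1 : Fin 2) = 0 from rfl]; ring
  have e10 : corr P 1 0 = c := by
    simp only [P, corr, Fin.sum_univ_two, Pi.add_apply, Pi.smul_apply, smul_eq_mul,
      PRbox, whiteNoise, sgn]
    norm_num [show ((1:Fin 2)+1 : Fin 2) = 0 from rfl]; ring
  have e11 : corr P 1 1 = -c := by
    simp only [P, corr, Fin.sum_univ_two, Pi.add_apply, Pi.smul_apply, smul_eq_mul,
      PRbox, whiteNoise, sgn]
    norm_num [show ((1:Fin 2)+1 : Fin 2) = 0 from rfl]; ring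
  have hmA : ∀ i, margA P i = 0 := by
    intro i
    fin_cases i <;>
    · simp only [P, margA, Fin.sum_univ_two, Pi.add_apply, Pi.smul_apply, smul_eq_mul,
        PRbox, whiteNoise, sgn]
      norm_num [show ((1:Fin 2)+1 : Fin 2) = 0 from rfl]; ring
  have hmB : ∀ j, margB P j = 0 := by
    intro j
    fin_cases j <;>
    · simp only [P, margB, Fin.sum_univ_two, Pi.add_apply, Pi.smul_apply, smul_eq_mul,
        PRbox, whiteNoise, sgn]
      norm_num [show ((1:Fin 2)+1 : Fin 2) = 0 from rfl] <;> ring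
  have hBF : ∀ a b g : Fin 2, BellF P a b g =
      (if a = 0 ∧ b = 0 then (if g = 0 then 4*c else -(4*c)) else 0) := by
    intro a b g
    fin_cases a <;> fin_cases b <;> fin_cases g <;>
      simp [BellF, e00, e01, e10, e11, sgn, show ((2:Fin 2):ℕ) = 0 from rfl,
        show ((3:Fin 2):ℕ) = 1 from rfl] <;> ring
  have hBD00 : BellD P 0 0 = 4*c := by
    simp [BellD, hBF, abs_of_nonneg (by linarith : (0:ℝ) ≤ 4*c)]
  have hBD : ∀ a b : Fin 2, ¬(a = 0 ∧ b = 0) → BellD P a b = 0 := by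
    intro a b hab
    simp [BellD, hBF, hab]
  have hBD01 := hBD 0 1 (by simp)
  have hBD10 := hBD 1 0 (by simp)
  have hBD11 := hBD 1 1 (by simp)
  have hBP : ∀ a b : Fin 2, BellProdD P a b = 0 := by
    intro a b
    simp [BellProdD, BellProdF, hmA, hmB]
  have hab4c : |4*c| = 4*c := abs_of_nonneg (by linarith)
  refine ⟨?_, ?_, ?_⟩
  · rw [Tmeasure, hBD00, hBD01, hBD10, hBD11, hBP, hBP, hBP, hBP]
    simp only [sub_zero, abs_zero, max_self]
    rw [hab4c, max_eq_left (by linarith : (0:ℝ) ≤ 4*c),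
      max_eq_left (by linarith : (0:ℝ) ≤ 4*c)]
    exact h4c
  · rw [BellDiscord, hBD00, hBD01, hBD10, hBD11]
    simp [hab4c]
    linarith [h4c]
  · have : BellF P 0 0 0 = 4*c := by rw [hBF]; simp
    rw [this, h4c]
    have hinv : 2 * Real.sqrt 2 * (Real.sqrt 2)⁻¹ = 2 := by field_simp
    constructor
    · intro h
      by_contra hs
      push_neg at hs
      have h2 : 2 * Real.sqrt 2 * s ≤ 2 * Real.sqrt 2 * (Real.sqrt 2)⁻¹ :=
        mul_le_mul_of_nonneg_left hs (by positivity)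
      linarith
    · intro h
      have h2 : 2 * Real.sqrt 2 * (Real.sqrt 2)⁻¹ < 2 * Real.sqrt 2 * s :=
        mul_lt_mul_of_pos_left h (by positivity)
      linarith
end
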